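/- Let n ≥ 1, let H be an abelian group, and suppose there exist injections I → I′ and J → J′ of types. If there exists an n-coherent family ⟨φ_{f⃗} : X(f⃗) → H : f⃗ ∈ (I → [J]^{<ω})^n⟩ that is not n-trivial, then there exists an n-coherent family ⟨ψ_{f⃗} : X(f⃗) → H : f⃗ ∈ (I′ → [J′]^{<ω})^n⟩ that is not n-trivial. -/

import Mathlib

open scoped BigOperators

namespace Stmt

variable {I J H : Type*} [AddCommGroup H]

/-- `X(f) = {(i,j) : j ∈ f i}` for `f : I → [J]^{<ω}`. -/
def XSet (f : I → Finset J) : Set (I × J) := {x : I × J | x.2 ∈ f x.1}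

/-- `X(f⃗) = ⋂ k X(f⃗ k)` for a tuple `f⃗` of functions `I → [J]^{<ω}`. -/
def XTup {n : ℕ} (F : Fin n → I → Finset J) : Set (I × J) := {x : I × J | ∀ k, x.2 ∈ F k x.1}

/-- A family indexed by `n`-tuples is alternating if permuting the tuple multiplies the
associated function by the sign of the permutation (on the common domain `X(f⃗)`). -/
def IsAlternating {n : ℕ} (φ : (Fin n → I → Finset J) → I × J → H) : Prop :=
  ∀ σ : Equiv.Perm (Fin n), ∀ F : Fin n → I → Finset J, ∀ x ∈ XTup F,
    φ (F ∘ σ) x = ((Equiv.Perm.sign σ : ℤˣ) : ℤ) • φ F x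

/-- `n`-coherence (for `n = m + 1 ≥ 1`): the family is alternating and for every
`(n+1)`-tuple `f⃗` the alternating sum `∑ i (-1)^i φ_{f⃗^i}` vanishes at all but finitely
many points of `X(f⃗)`. -/
def IsNCoherent {m : ℕ} (φ : (Fin (m + 1) → I → Finset J) → I × J → H) : Prop :=
  IsAlternating φ ∧
    ∀ F : Fin (m + 2) → I → Finset J,
      {x ∈ XTup F |
        ∑ i : Fin (m + 2), ((-1 : ℤ) ^ (i : ℕ)) • φ (Fin.removeNth i F) x ≠ 0}.Finite

/-- `n`-triviality (for `n = m + 1 ≥ 1`): there is an alternating family `ψ` indexed by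
`(n-1)`-tuples such that for every `n`-tuple `f⃗` the function
`∑ i (-1)^i ψ_{f⃗^i} - φ_{f⃗}` vanishes at all but finitely many points of `X(f⃗)`. -/
def IsNTrivial {m : ℕ} (φ : (Fin (m + 1) → I → Finset J) → I × J → H) : Prop :=
  ∃ ψ : (Fin m → I → Finset J) → I × J → H, IsAlternating ψ ∧
    ∀ F : Fin (m + 1) → I → Finset J,
      {x ∈ XTup F |
        (∑ i : Fin (m + 1), ((-1 : ℤ) ^ (i : ℕ)) • ψ (Fin.removeNth i F) x) - φ F x ≠ 0}.Finite

end Stmt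


namespace Aux

attribute [local instance] Classical.propDecidable

variable {I I' J J' : Type*}

/-- pull back a tuple of functions along injections -/
noncomputable def pbF (eI : I → I') (eJ : J → J') (heJ : Function.Injective eJ) {n : ℕ}
    (F' : Fin n → I' → Finset J') : Fin n → I → Finset J :=
  fun k i => (F' k (eI i)).preimage eJ heJ.injOn

theorem pbF_comp (eI : I → I') (eJ : J → J') (heJ : Function.Injective eJ) {n : ℕ}
    (F' : Fin n → I' → Finset J') (σ : Equiv.Perm (Fin n)) :
    pbF eI eJ heJ (F' ∘ σ) = (pbF eI eJ heJ F') ∘ σ := rfl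

theorem pbF_removeNth (eI : I → I') (eJ : J → J') (heJ : Function.Injective eJ) {n : ℕ}
    (F' : Fin (n+1) → I' → Finset J') (i : Fin (n+1)) :
    pbF eI eJ heJ (Fin.removeNth i F') = Fin.removeNth i (pbF eI eJ heJ F') := rfl

/-- push forward a tuple along injections -/
noncomputable def pfF (eI : I → I') (eJ : J → J') {n : ℕ}
    (G : Fin n → I → Finset J) : Fin n → I' → Finset J' :=
  fun k i' => if h : ∃ i, eI i = i' then (G k h.choose).image eJ else ∅

theorem pfF_apply (eI : I → I') (heI : Function.Injective eI) (eJ : J → J') {n : ℕ}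
    (G : Fin n → I → Finset J) (k : Fin n) (i : I) :
    pfF eI eJ G k (eI i) = (G k i).image eJ := by
  have h : ∃ i₀, eI i₀ = eI i := ⟨i, rfl⟩
  have := heI h.choose_spec
  simp only [pfF, dif_pos h, this]

theorem pbF_pfF (eI : I → I') (heI : Function.Injective eI)
    (eJ : J → J') (heJ : Function.Injective eJ) {n : ℕ}
    (G : Fin n → I → Finset J) : pbF eI eJ heJ (pfF eI eJ G) = G := by
  funext k i
  ext j
  simp [pbF, pfF_apply eI heI eJ, Finset.mem_preimage, heJ.eq_iff]

end Aux

open Stmt Aux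


/-- Let `n = m + 1 ≥ 1`, let `H` be an abelian group, and suppose there are
injections `I → I\'` and `J → J\'`.  If there is an `n`-coherent family for `(I, J)` with
values in `H` that is not `n`-trivial, then there is an `n`-coherent family for `(I\', J\')`
with values in `H` that is not `n`-trivial. -/
theorem stmt_7 (m : ℕ) (H : Type*) [AddCommGroup H] (I I' J J' : Type*)
    (eI : I → I') (heI : Function.Injective eI)
    (eJ : J → J') (heJ : Function.Injective eJ)
    (h : ∃ φ : (Fin (m + 1) → I → Finset J) → I × J → H, IsNCoherent φ ∧ ¬ IsNTrivial φ) :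
    ∃ ψ : (Fin (m + 1) → I' → Finset J') → I' × J' → H, IsNCoherent ψ ∧ ¬ IsNTrivial ψ := by
  classical
  obtain ⟨φ, ⟨halt, hcoh⟩, hnt⟩ := h
  set e : I × J → I' × J' := fun p => (eI p.1, eJ p.2) with he
  have hein : Function.Injective e := by
    intro p q hpq
    rw [Prod.mk.injEq] at hpq
    exact Prod.ext (heI hpq.1) (heJ hpq.2)
  set ψ : (Fin (m + 1) → I' → Finset J') → I' × J' → H :=
    fun F' x => if h : ∃ p : I × J, e p = x then φ (pbF eI eJ heJ F') h.choose else 0 with hψ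
  have psi_apply : ∀ (F' : Fin (m+1) → I' → Finset J') (p : I × J),
      ψ F' (e p) = φ (pbF eI eJ heJ F') p := by
    intro F' p
    have hex : ∃ q : I × J, e q = e p := ⟨p, rfl⟩
    have : hex.choose = p := hein hex.choose_spec
    simp only [hψ, dif_pos hex, this]
  have psi_zero : ∀ (F' : Fin (m+1) → I' → Finset J') (x : I' × J'),
      (¬ ∃ p : I × J, e p = x) → ψ F' x = 0 := by
    intro F' x hx
    simp only [hψ, dif_neg hx]
  have mem_pb : ∀ {n : ℕ} (F' : Fin n → I' → Finset J') (p : I × J),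
      p ∈ XTup (pbF eI eJ heJ F') ↔ e p ∈ XTup F' := by
    intro n F' p
    simp [XTup, pbF, Finset.mem_preimage]
    exact Iff.rfl
  refine ⟨ψ, ⟨?_, ?_⟩, ?_⟩
  · -- alternating
    intro σ F' x hx
    by_cases hex : ∃ p : I × J, e p = x
    · obtain ⟨p, rfl⟩ := hex
      rw [psi_apply, psi_apply, pbF_comp]
      exact halt σ _ p ((mem_pb F' p).2 hx)
    · rw [psi_zero _ _ hex, psi_zero _ _ hex, smul_zero]
  · -- coherence
    intro F'
    have hfin := hcoh (pbF eI eJ heJ F')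
    refine (hfin.image e).subset ?_
    rintro x ⟨hx, hsum⟩
    have hex : ∃ p : I × J, e p = x := by
      by_contra hne
      apply hsum
      refine Finset.sum_eq_zero fun i _ => ?_
      rw [psi_zero _ _ hne, smul_zero]
    obtain ⟨p, rfl⟩ := hex
    refine ⟨p, ⟨(mem_pb F' p).2 hx, ?_⟩, rfl⟩
    intro hz
    apply hsum
    calc ∑ i : Fin (m + 2), ((-1 : ℤ) ^ (i : ℕ)) • ψ (Fin.removeNth i F') (e p)
        = ∑ i : Fin (m + 2), ((-1 : ℤ) ^ (i : ℕ)) •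
            φ (Fin.removeNth i (pbF eI eJ heJ F')) p := by
          refine Finset.sum_congr rfl fun i _ => ?_
          rw [psi_apply, pbF_removeNth]
      _ = 0 := hz
  · -- nontrivial
    intro ⟨χ', hχalt, hχ⟩
    apply hnt
    set χ : (Fin m → I → Finset J) → I × J → H :=
      fun G p => χ' (pfF eI eJ G) (e p) with hχdef
    have pf_mem : ∀ {n : ℕ} (G : Fin n → I → Finset J) (p : I × J),
        p ∈ XTup G → e p ∈ XTup (pfF eI eJ G) := by
      intro n G p hp k
      rw [pfF_apply eI heI eJ]
      exact Finset.mem_image_of_mem eJ (hp k)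
    refine ⟨χ, ?_, ?_⟩
    · intro σ G p hp
      have h1 : pfF eI eJ (G ∘ σ) = (pfF eI eJ G) ∘ σ := rfl
      simp only [hχdef, h1]
      exact hχalt σ _ (e p) (pf_mem G p hp)
    · intro F
      have hfin := hχ (pfF eI eJ F)
      refine ((hfin.preimage (hein.injOn)).subset ?_)
      rintro p ⟨hp, hsum⟩
      refine ⟨pf_mem F p hp, ?_⟩
      intro hz
      apply hsum
      have hrm : ∀ i : Fin (m+1),
          Fin.removeNth i (pfF eI eJ F) = pfF eI eJ (Fin.removeNth i F) := fun _ => rfl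
      have hψφ : ψ (pfF eI eJ F) (e p) = φ F p := by
        rw [psi_apply, pbF_pfF eI heI eJ heJ]
      calc (∑ i : Fin (m + 1), ((-1 : ℤ) ^ (i : ℕ)) • χ (Fin.removeNth i F) p) - φ F p
          = (∑ i : Fin (m + 1), ((-1 : ℤ) ^ (i : ℕ)) •
              χ' (Fin.removeNth i (pfF eI eJ F)) (e p)) - ψ (pfF eI eJ F) (e p) := by
            rw [hψφ]
            simp only [hχdef, hrm]
        _ = 0 := hz
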